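/- Let L be a profinite space. Then the abelian group C(L, ℤ) of continuous ℤ-valued functions is a free ℤ-module, and the quotient C(L, ℤ)/ℤ by the constant functions is also a free ℤ-module. -/

import Mathlib

open Finsupp in
/-- Quotient of a module by the span of a single basis vector is free. -/
lemma free_quot_span_basis_vector {R M ι : Type*} [CommRing R] [AddCommGroup M] [Module R M]
    (b : Module.Basis ι R M) (i₀ : ι) :
    Module.Free R (M ⧸ Submodule.span R {b i₀}) := by
  classical
  set s : Set ι := {i | i ≠ i₀} with hs
  let f : M →ₗ[R] (s →₀ R) := (Finsupp.lsubtypeDomain s).comp (b.repr : M →ₗ[R] (ι →₀ R))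
  have hsub : Function.Surjective
      (Finsupp.subtypeDomain (· ∈ s) : (ι →₀ R) → (s →₀ R)) := by
    intro g
    refine ⟨Finsupp.embDomain (Function.Embedding.subtype _) g, ?_⟩
    ext i
    rw [Finsupp.subtypeDomain_apply]
    exact Finsupp.embDomain_apply_self (Function.Embedding.subtype _) g i
  have hsurj : Function.Surjective f := hsub.comp b.repr.surjective
  have hker : LinearMap.ker f = Submodule.span R {b i₀} := by
    ext v
    simp only [LinearMap.mem_ker, Submodule.mem_span_singleton]
    constructor
    · intro h
      have h' : ∀ i : ι, i ≠ i₀ → b.repr v i = 0 := by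
        intro i hi
        have := DFunLike.congr_fun h ⟨i, hi⟩
        simpa [f, Finsupp.lsubtypeDomain, Finsupp.subtypeDomain] using this
      refine ⟨b.repr v i₀, ?_⟩
      have : b.repr v = Finsupp.single i₀ (b.repr v i₀) := by
        ext i
        by_cases hi : i = i₀
        · subst hi; simp
        · simp [Finsupp.single_apply, Ne.symm hi, h' i hi]
      symm
      calc v = b.repr.symm (b.repr v) := (b.repr.symm_apply_apply v).symm
        _ = b.repr.symm (Finsupp.single i₀ (b.repr v i₀)) := by rw [← this]
        _ = b.repr v i₀ • b i₀ := by rw [b.repr_symm_single]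
    · rintro ⟨c, rfl⟩
      ext i
      have : (i : ι) ≠ i₀ := i.2
      simp [f, Finsupp.lsubtypeDomain, Finsupp.subtypeDomain, Finsupp.single_apply,
        Ne.symm this, this]
  have e : (M ⧸ Submodule.span R {b i₀}) ≃ₗ[R] (s →₀ R) := by
    rw [← hker]
    exact f.quotKerEquivOfSurjective hsurj
  exact Module.Free.of_equiv e.symm

/-- Transfer freeness of a quotient by a singleton span along a linear equivalence. -/
lemma free_quot_span_of_equiv {R M N : Type*} [CommRing R] [AddCommGroup M] [Module R M]
    [AddCommGroup N] [Module R N] (e : M ≃ₗ[R] N) (x : M)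
    (h : Module.Free R (M ⧸ Submodule.span R {x})) :
    Module.Free R (N ⧸ Submodule.span R {e x}) := by
  have hmap : (Submodule.span R {x}).map (e : M →ₗ[R] N) = Submodule.span R {e x} := by
    rw [Submodule.map_span]
    simp
  exact Module.Free.of_equiv
    (Submodule.Quotient.equiv (Submodule.span R {x}) (Submodule.span R {e x}) e hmap)

/-- The linear equivalence between continuous and locally constant integer-valued
functions on a topological space (ℤ being discrete). -/
noncomputable def contLCEquiv (L : Type*) [TopologicalSpace L] :
    C(L, ℤ) ≃ₗ[ℤ] LocallyConstant L ℤ where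
  toFun f := ⟨f, (IsLocallyConstant.iff_continuous f).mpr f.continuous⟩
  invFun g := g.toContinuousMap
  left_inv f := rfl
  right_inv g := rfl
  map_add' f g := rfl
  map_smul' c f := rfl

open Profinite NobelingProof in
lemma free_LC_quot (L : Type*) [TopologicalSpace L] [CompactSpace L] [T2Space L]
    [TotallyDisconnectedSpace L] [Nonempty L] :
    Module.Free ℤ (LocallyConstant L ℤ ⧸ Submodule.span ℤ {(1 : LocallyConstant L ℤ)}) := by
  classical
  let S : Profinite := Profinite.of L
  obtain ⟨_, _⟩ := exists_wellOrder {C : Set S // IsClopen C}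
  let ι := Nobeling.ι S
  have hι := Nobeling.isClosedEmbedding S
  set C : Set ({C : Set S // IsClopen C} → Bool) := Set.range ι with hC
  have hCc : IsClosed C := hι.isClosed_range
  have hCne : Nonempty C := by
    obtain ⟨x⟩ := (inferInstance : Nonempty L)
    exact ⟨⟨ι x, ⟨x, rfl⟩⟩⟩
  -- the basis of LocallyConstant C ℤ
  let b := GoodProducts.Basis C hCc
  -- nil is a good product
  have hnil : Products.isGood C Products.nil := by
    intro hmem
    rw [Products.lt_nil_empty, Set.image_empty, Submodule.span_empty,
      Submodule.mem_bot] at hmem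
    have h1 : (Products.nil.eval C) = (1 : LocallyConstant C ℤ) := by
      simp [Products.eval, Products.nil]
    rw [h1] at hmem
    obtain ⟨c⟩ := hCne
    have := DFunLike.congr_fun hmem c
    simp at this
  have hb : b ⟨Products.nil, hnil⟩ = (1 : LocallyConstant C ℤ) := by
    show (GoodProducts.Basis C hCc) _ = _
    rw [GoodProducts.Basis]; erw [Module.Basis.mk_apply]
    simp [GoodProducts.eval, Products.eval, Products.nil]
  have hfree := free_quot_span_basis_vector b ⟨Products.nil, hnil⟩
  rw [hb] at hfree
  -- transfer along congrLeftₗ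
  let e : LocallyConstant C ℤ ≃ₗ[ℤ] LocallyConstant S ℤ :=
    LocallyConstant.congrLeftₗ ℤ (hι.isEmbedding.toHomeomorph).symm
  have he : e 1 = 1 := rfl
  have := free_quot_span_of_equiv e 1 hfree
  rwa [he] at this

/-- for a profinite space L, the abelian group C(L,ℤ) of continuous
(= locally constant) ℤ-valued functions is a free ℤ-module, and its quotient by the
subgroup of constant functions is also a free ℤ-module. -/
theorem stmt_15 {L : Type*} [TopologicalSpace L] [CompactSpace L] [T2Space L]
    [TotallyDisconnectedSpace L] :
    Module.Free ℤ C(L, ℤ) ∧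
    Module.Free ℤ (C(L, ℤ) ⧸ Submodule.span ℤ {(1 : C(L, ℤ))}) := by
  have hfreeLC : Module.Free ℤ (LocallyConstant L ℤ) :=
    LocallyConstant.freeOfProfinite (Profinite.of L)
  constructor
  · exact Module.Free.of_equiv (contLCEquiv L).symm
  · cases isEmpty_or_nonempty L with
    | inl h =>
      have hsing : Subsingleton C(L, ℤ) := ⟨fun f g => by ext x; exact h.elim x⟩
      haveI : Subsingleton (C(L, ℤ) ⧸ Submodule.span ℤ {(1 : C(L, ℤ))}) :=
        (Submodule.Quotient.mk_surjective _).subsingleton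
      exact Module.Free.of_subsingleton ℤ _
    | inr h =>
      have hfree := free_LC_quot L
      have h2 := free_quot_span_of_equiv (contLCEquiv L).symm (1 : LocallyConstant L ℤ) hfree
      have he : ((contLCEquiv L).symm (1 : LocallyConstant L ℤ)) = (1 : C(L, ℤ)) := rfl
      rwa [he] at h2
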